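/- Let d ≥ 1 and let A and B be arbitrary d×d complex matrices. Then the first-moment Haar integral satisfies ∫ Tr(V A Vᴴ B) dμ(V) = Tr(A) · Tr(B) / d. -/

import Mathlib

open MeasureTheory Matrix

/-- Borel measurable structure on the unitary group `U(d)`. -/
noncomputable instance (d : ℕ) : MeasurableSpace (Matrix.unitaryGroup (Fin d) ℂ) := borel _
instance (d : ℕ) : BorelSpace (Matrix.unitaryGroup (Fin d) ℂ) := ⟨rfl⟩

instance (d : ℕ) : CompactSpace (Matrix.unitaryGroup (Fin d) ℂ) := by
  apply isCompact_iff_compactSpace.mp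
  have hclosed : IsClosed (Matrix.unitaryGroup (Fin d) ℂ : Set (Matrix (Fin d) (Fin d) ℂ)) := by
    have : (Matrix.unitaryGroup (Fin d) ℂ : Set (Matrix (Fin d) (Fin d) ℂ)) =
        {U | star U * U = 1} ∩ {U | U * star U = 1} := by
      ext U; exact Unitary.mem_iff
    rw [this]
    exact (isClosed_eq (continuous_star.mul continuous_id) continuous_const).inter
      (isClosed_eq (continuous_id.mul continuous_star) continuous_const)
  refine IsCompact.of_isClosed_subset
    (isCompact_univ_pi fun i : Fin d => isCompact_univ_pi fun j : Fin d =>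
      isCompact_closedBall (0:ℂ) 1) hclosed ?_
  · intro U hU
    refine Set.mem_univ_pi.2 fun i => Set.mem_univ_pi.2 fun j => ?_
    rw [Metric.mem_closedBall, dist_zero_right]
    exact entry_norm_bound_of_unitary hU i j

instance (d : ℕ) : MeasurableMul (Matrix.unitaryGroup (Fin d) ℂ) := by
  constructor
  · intro c
    apply Continuous.measurable
    apply continuous_induced_rng.2
    exact continuous_const.matrix_mul continuous_subtype_val
  · intro c
    apply Continuous.measurable
    apply continuous_induced_rng.2
    exact continuous_subtype_val.matrix_mul continuous_const


lemma schur_aux {d : ℕ} (hd : 1 ≤ d) (M : Matrix (Fin d) (Fin d) ℂ)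
    (h : ∀ U : Matrix.unitaryGroup (Fin d) ℂ,
      (U : Matrix (Fin d) (Fin d) ℂ) * M * (U : Matrix (Fin d) (Fin d) ℂ)ᴴ = M) :
    M = (M.trace / d) • 1 := by
  classical
  have hoff : ∀ i j : Fin d, i ≠ j → M i j = 0 := by
    intro i j hij
    set ε : Fin d → ℂ := fun k => if k = i then -1 else 1 with hε
    have hU : diagonal ε ∈ Matrix.unitaryGroup (Fin d) ℂ := by
      rw [Matrix.mem_unitaryGroup_iff, star_eq_conjTranspose, diagonal_conjTranspose,
        diagonal_mul_diagonal]
      convert Matrix.diagonal_one using 2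
      funext k
      by_cases hk : k = i <;> simp [hε, hk]
    have hcom : diagonal ε * M * (diagonal ε)ᴴ = M := h ⟨diagonal ε, hU⟩
    have hentry := congrFun (congrFun (congrArg (fun X : Matrix (Fin d) (Fin d) ℂ => (X : Fin d → Fin d → ℂ)) hcom) i) j
    simp only [diagonal_conjTranspose] at hentry
    rw [show (diagonal ε * M * diagonal (star ε)) i j = ε i * M i j * star (ε j) by
      rw [mul_diagonal, diagonal_mul]; rfl] at hentry
    simp [hε, hij.symm] at hentry
    -- hentry : -(M i j) = M i j  (hopefully)
    linear_combination (-1/2 : ℂ) * hentry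
  have hdiag : ∀ i j : Fin d, M i i = M j j := by
    intro i j
    set σ : Equiv.Perm (Fin d) := Equiv.swap i j with hσ
    set P : Matrix (Fin d) (Fin d) ℂ := σ.permMatrix ℂ with hP
    have hPt : Pᴴ = (σ⁻¹).permMatrix ℂ := by
      ext k l
      simp only [hP, Equiv.Perm.permMatrix, conjTranspose_apply, PEquiv.toMatrix_apply,
        Equiv.toPEquiv_apply, Option.mem_def, Option.some.injEq]
      by_cases hkl : k = σ l
      · simp [hkl]
      · have h2 : ¬ (σ⁻¹ k = l) := fun hc => hkl (by rw [← hc]; simp)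
        have h3 : ¬ σ l = k := fun hc => hkl hc.symm
        simp [hkl, h2, h3]
        exact h2
    have hPu : P ∈ Matrix.unitaryGroup (Fin d) ℂ := by
      rw [Matrix.mem_unitaryGroup_iff, star_eq_conjTranspose, hPt]
      show σ.toPEquiv.toMatrix * (σ⁻¹).toPEquiv.toMatrix = 1
      rw [PEquiv.mul_toMatrix_toPEquiv]
      ext k l
      simp [PEquiv.toMatrix_apply, Equiv.toPEquiv_apply, one_apply, Equiv.Perm.inv_def,
        Equiv.symm_apply_eq, eq_comm]
    have hcom : P * M * Pᴴ = M := h ⟨P, hPu⟩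
    have hentry := congrFun (congrFun (congrArg (fun X : Matrix (Fin d) (Fin d) ℂ => (X : Fin d → Fin d → ℂ)) hcom) i) i
    rw [hPt] at hentry
    rw [show P * M = M.submatrix σ id from PEquiv.toMatrix_toPEquiv_mul σ M] at hentry
    rw [show M.submatrix σ id * (σ⁻¹).permMatrix ℂ = (M.submatrix σ id).submatrix id (σ⁻¹).symm
      from PEquiv.mul_toMatrix_toPEquiv _ (σ⁻¹)] at hentry
    simp only [submatrix_apply, id_eq] at hentry
    simpa [hσ] using hentry.symm
  have i0 : Fin d := ⟨0, hd⟩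
  have htr : M.trace = d * M i0 i0 := by
    rw [Matrix.trace]
    simp only [Matrix.diag]
    rw [Finset.sum_congr rfl (fun i _ => hdiag i i0)]
    simp [Finset.card_univ, mul_comm]
  ext i j
  by_cases hij : i = j
  · subst hij
    have hd0 : (d:ℂ) ≠ 0 := Nat.cast_ne_zero.mpr (by omega)
    rw [Matrix.smul_apply, Matrix.one_apply_eq, smul_eq_mul, mul_one, htr, hdiag i i0,
      mul_div_cancel_left₀ _ hd0]
  · rw [hoff i j hij, Matrix.smul_apply, Matrix.one_apply_ne hij, smul_eq_mul, mul_zero]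

/-- **First-moment Haar integral.** For any `d × d` complex matrices `A` and `B`, and `μ` the
normalized Haar probability measure on the unitary group `U(d)`,
`∫ Tr(V A Vᴴ B) dμ(V) = Tr(A) Tr(B) / d`. -/
theorem first_moment_haar_integral (d : ℕ) (hd : 1 ≤ d)
    (μ : Measure (Matrix.unitaryGroup (Fin d) ℂ)) [μ.IsHaarMeasure] [IsProbabilityMeasure μ]
    (A B : Matrix (Fin d) (Fin d) ℂ) :
    ∫ V : Matrix.unitaryGroup (Fin d) ℂ,
        ((V : Matrix (Fin d) (Fin d) ℂ) * A * (V : Matrix (Fin d) (Fin d) ℂ)ᴴ * B).trace ∂μ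
      = A.trace * B.trace / (d : ℂ) := by
  classical
  set g : Matrix.unitaryGroup (Fin d) ℂ → Matrix (Fin d) (Fin d) ℂ :=
    fun V => (V : Matrix (Fin d) (Fin d) ℂ) * A * (V : Matrix (Fin d) (Fin d) ℂ)ᴴ with hg
  have hgcont : Continuous g :=
    (continuous_subtype_val.matrix_mul continuous_const).matrix_mul
      continuous_subtype_val.matrix_conjTranspose
  have hint : ∀ i j : Fin d, Integrable (fun V => g V i j) μ := fun i j =>
    (hgcont.matrix_elem i j).integrable_of_hasCompactSupport
      (HasCompactSupport.of_compactSpace _)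
  set M : Matrix (Fin d) (Fin d) ℂ := Matrix.of fun i j => ∫ V, g V i j ∂μ with hM
  -- invariance
  have hinv : ∀ U : Matrix.unitaryGroup (Fin d) ℂ,
      (U : Matrix (Fin d) (Fin d) ℂ) * M * (U : Matrix (Fin d) (Fin d) ℂ)ᴴ = M := by
    intro U
    ext i j
    have step1 : ((U : Matrix (Fin d) (Fin d) ℂ) * M * (U : Matrix (Fin d) (Fin d) ℂ)ᴴ) i j
        = ∑ k, ∑ l, ∫ V, (U : Matrix (Fin d) (Fin d) ℂ) i l * g V l k
            * (U : Matrix (Fin d) (Fin d) ℂ)ᴴ k j ∂μ := by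
      simp only [Matrix.mul_apply, hM, Matrix.of_apply, Finset.sum_mul]
      refine Finset.sum_congr rfl fun k _ => Finset.sum_congr rfl fun l _ => ?_
      rw [← integral_const_mul, ← integral_mul_const]
    have hintkl : ∀ k l : Fin d, Integrable (fun V =>
        (U : Matrix (Fin d) (Fin d) ℂ) i l * g V l k
          * (U : Matrix (Fin d) (Fin d) ℂ)ᴴ k j) μ :=
      fun k l => ((hint l k).const_mul _).mul_const _
    have step2 : (∑ k, ∑ l, ∫ V, (U : Matrix (Fin d) (Fin d) ℂ) i l * g V l k
            * (U : Matrix (Fin d) (Fin d) ℂ)ᴴ k j ∂μ)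
        = ∫ V, ((U : Matrix (Fin d) (Fin d) ℂ) * g V * (U : Matrix (Fin d) (Fin d) ℂ)ᴴ) i j ∂μ := by
      rw [show (∑ k, ∑ l, ∫ V, (U : Matrix (Fin d) (Fin d) ℂ) i l * g V l k
            * (U : Matrix (Fin d) (Fin d) ℂ)ᴴ k j ∂μ)
          = ∑ k : Fin d, ∫ V, ∑ l, (U : Matrix (Fin d) (Fin d) ℂ) i l * g V l k
            * (U : Matrix (Fin d) (Fin d) ℂ)ᴴ k j ∂μ from
        Finset.sum_congr rfl fun k _ => (integral_finset_sum _ fun l _ => hintkl k l).symm]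
      rw [← integral_finset_sum _ fun k _ => integrable_finset_sum _ fun l _ => hintkl k l]
      congr 1
      funext V
      simp only [Matrix.mul_apply, Finset.sum_mul]
    have step3 : ∀ V : Matrix.unitaryGroup (Fin d) ℂ,
        (U : Matrix (Fin d) (Fin d) ℂ) * g V * (U : Matrix (Fin d) (Fin d) ℂ)ᴴ = g (U * V) := by
      intro V
      have : ((U * V : Matrix.unitaryGroup (Fin d) ℂ) : Matrix (Fin d) (Fin d) ℂ)
          = (U : Matrix (Fin d) (Fin d) ℂ) * (V : Matrix (Fin d) (Fin d) ℂ) := rfl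
      simp only [hg, this, Matrix.conjTranspose_mul, Matrix.mul_assoc]
    have step4 : ∫ V, g (U * V) i j ∂μ = M i j := by
      rw [hM, Matrix.of_apply]
      exact integral_mul_left_eq_self (fun V => g V i j) U
    rw [step1, step2]
    simp_rw [step3]
    exact step4
  -- Schur
  have hM_scalar : M = (M.trace / d) • 1 := schur_aux hd M hinv
  -- trace of M
  have htrM : M.trace = A.trace := by
    rw [Matrix.trace]
    simp only [Matrix.diag, hM, Matrix.of_apply]
    rw [← integral_finset_sum _ fun i _ => hint i i]
    have : ∀ V : Matrix.unitaryGroup (Fin d) ℂ, (∑ i, g V i i) = A.trace := by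
      intro V
      have h1 : (∑ i, g V i i) = (g V).trace := rfl
      rw [h1, hg]
      rw [Matrix.trace_mul_comm]
      rw [← Matrix.mul_assoc]
      have h2 : (V : Matrix (Fin d) (Fin d) ℂ)ᴴ * (V : Matrix (Fin d) (Fin d) ℂ) = 1 := by
        rw [← Matrix.star_eq_conjTranspose]
        exact Unitary.star_mul_self_of_mem V.2
      rw [h2, Matrix.one_mul]
    simp_rw [this]
    simp
  -- final computation
  have key : (∫ V : Matrix.unitaryGroup (Fin d) ℂ, (g V * B).trace ∂μ) = (M * B).trace := by
    have hexp : ∀ V : Matrix.unitaryGroup (Fin d) ℂ,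
        (g V * B).trace = ∑ i, ∑ j, g V i j * B j i := by
      intro V
      rw [Matrix.trace]
      simp [Matrix.diag, Matrix.mul_apply]
    simp_rw [hexp]
    rw [integral_finset_sum _ fun i _ => integrable_finset_sum _ fun j _ => (hint i j).mul_const _]
    rw [Matrix.trace]
    simp only [Matrix.diag, Matrix.mul_apply, hM, Matrix.of_apply]
    refine Finset.sum_congr rfl fun i _ => ?_
    rw [integral_finset_sum _ fun j _ => (hint i j).mul_const _]
    exact Finset.sum_congr rfl fun j _ => integral_mul_const _ _
  have hgoal : (∫ V : Matrix.unitaryGroup (Fin d) ℂ,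
      ((V : Matrix (Fin d) (Fin d) ℂ) * A * (V : Matrix (Fin d) (Fin d) ℂ)ᴴ * B).trace ∂μ)
      = (M * B).trace := key
  rw [hgoal, hM_scalar, htrM, Matrix.smul_mul, Matrix.trace_smul, Matrix.one_mul,
    smul_eq_mul, div_mul_eq_mul_div]
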